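/- For Δ_ε = Δ + x_1^{p-1}···x_{n-1}^{p-1}Σ_{i=1}^{n-1}(−1)^{n−i}ε_iD_i ∈ W_{n-1}, the powers Δ_ε^{p^i} for i = 0,...,n−2 satisfy Δ_ε^{p^i} ≡ (−1)^iD_{i+1} modulo m·W_{n-1}, and thus form a basis of W_{n-1} as a free B_{n-1}-module. -/

import Mathlib

open Finset Nat

namespace DeltaAux

/-- base-`p` digit `j` of `N` -/
def dig (p N j : ℕ) : ℕ := N / p ^ j % p

/-- lowest nonzero digit of `N` (in base `p`) -/
def lo (p N : ℕ) : ℕ := dig p N (padicValNat p N)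

section Arith

variable {p : ℕ} (hp : p.Prime)

private lemma div_mul_pred {b a : ℕ} (hb : 0 < b) (ha : 0 < a) :
    (b * a - 1) / b = a - 1 := by
  obtain ⟨n, rfl⟩ := Nat.exists_eq_add_of_le ha
  have hmul : b * (1 + n) = b + b * n := by ring
  have h1 : b * (1 + n) - 1 = (b - 1) + b * n := by omega
  rw [h1, Nat.add_mul_div_left _ _ hb, Nat.div_eq_of_lt (by omega)]
  omega

private lemma mul_pred_mod {s : ℕ} (hp2 : 2 ≤ p) (hs : 0 < s) :
    (p * s - 1) % p = p - 1 := by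
  obtain ⟨n, rfl⟩ := Nat.exists_eq_add_of_le hs
  have hmul : p * (1 + n) = p + p * n := by ring
  have h1 : p * (1 + n) - 1 = (p - 1) + p * n := by omega
  rw [h1, Nat.add_mul_mod_self_left, Nat.mod_eq_of_lt (by omega)]

private lemma pred_mod {q : ℕ} (hp2 : 2 ≤ p) (h : ¬ p ∣ q) : (q - 1) % p = q % p - 1 := by
  have hq : q % p ≠ 0 := fun hc => h (Nat.dvd_of_mod_eq_zero hc)
  have h0 := Nat.mod_add_div q p
  have hlt : q % p < p := Nat.mod_lt _ (by omega)
  have h1 : q - 1 = (q % p - 1) + p * (q / p) := by omega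
  rw [h1, Nat.add_mul_mod_self_left, Nat.mod_eq_of_lt (by omega)]

include hp

omit hp in
lemma pow_padicValNat_le {N : ℕ} (hN : N ≠ 0) : p ^ padicValNat p N ≤ N :=
  Nat.le_of_dvd (Nat.pos_of_ne_zero hN) pow_padicValNat_dvd

lemma padicValNat_lt_of_lt_pow {N m : ℕ} (hN : N ≠ 0) (h : N < p ^ m) :
    padicValNat p N < m := by
  by_contra hc
  push_neg at hc
  have h1 := pow_padicValNat_le (p := p) hN
  have h2 : p ^ m ≤ p ^ padicValNat p N :=
    Nat.pow_le_pow_right hp.one_lt.le hc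
  omega

lemma dig_eq_zero_of_lt {N j : ℕ} (hN : N ≠ 0) (hj : j < padicValNat p N) :
    dig p N j = 0 := by
  have hdvd : p ^ (j + 1) ∣ N := dvd_trans (pow_dvd_pow p (by omega)) pow_padicValNat_dvd
  obtain ⟨c, hc⟩ := hdvd
  have hc2 : N = p ^ j * (p * c) := by rw [hc]; ring
  have h2 : N / p ^ j = p * c := by
    rw [hc2, Nat.mul_div_cancel_left _ (pow_pos hp.pos _)]
  simp [dig, h2, Nat.mul_mod_right]

lemma not_dvd_div_pow {N : ℕ} (hN : N ≠ 0) : ¬ p ∣ N / p ^ padicValNat p N := by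
  haveI : Fact p.Prime := ⟨hp⟩
  intro hc
  have h1 : p ^ (padicValNat p N + 1) ∣ N := by
    obtain ⟨c, hc'⟩ := hc
    have h0 : p ^ padicValNat p N * (N / p ^ padicValNat p N) = N :=
      Nat.mul_div_cancel' pow_padicValNat_dvd
    rw [hc'] at h0
    have hr : p ^ (padicValNat p N + 1) * c = p ^ padicValNat p N * (p * c) := by ring
    exact ⟨c, by rw [hr, h0]⟩
  exact pow_succ_padicValNat_not_dvd hN h1

lemma lo_ne_zero {N : ℕ} (hN : N ≠ 0) : lo p N ≠ 0 := by
  have := not_dvd_div_pow hp hN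
  simpa [lo, dig, Nat.dvd_iff_mod_eq_zero] using this

lemma dig_ne_zero_at_val {N : ℕ} (hN : N ≠ 0) : dig p N (padicValNat p N) ≠ 0 :=
  lo_ne_zero hp hN

lemma dig_pred_of_lt {N j : ℕ} (hN : N ≠ 0) (hj : j < padicValNat p N) :
    dig p (N - 1) j = p - 1 := by
  set t := padicValNat p N with ht
  obtain ⟨c, hc⟩ : p ^ t ∣ N := pow_padicValNat_dvd
  have hc0 : c ≠ 0 := by rintro rfl; simp at hc; omega
  have hkey : N = p ^ j * (p ^ (t - j) * c) := by
    rw [hc, ← mul_assoc, ← pow_add]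
    congr 2
    omega
  have hA : 0 < p ^ (t - j) * c :=
    Nat.mul_pos (pow_pos hp.pos _) (Nat.pos_of_ne_zero hc0)
  have hdiv : (N - 1) / p ^ j = p ^ (t - j) * c - 1 := by
    rw [hkey]; exact div_mul_pred (pow_pos hp.pos _) hA
  have hmul : p ^ (t - j) * c = p * (p ^ (t - j - 1) * c) := by
    rw [← mul_assoc, ← pow_succ']
    congr 2
    omega
  rw [dig, hdiv, hmul, mul_pred_mod hp.two_le]
  have : 0 < p ^ (t - j - 1) * c := Nat.mul_pos (pow_pos hp.pos _) (Nat.pos_of_ne_zero hc0)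
  omega

lemma dig_pred_at_val {N : ℕ} (hN : N ≠ 0) :
    dig p (N - 1) (padicValNat p N) = dig p N (padicValNat p N) - 1 := by
  set t := padicValNat p N with ht
  set q := N / p ^ t with hq
  have hdvd : p ^ t ∣ N := pow_padicValNat_dvd
  have hNq : N = p ^ t * q := (Nat.mul_div_cancel' hdvd).symm
  have hq0 : 0 < q := by
    rcases Nat.eq_zero_or_pos q with h | h
    · rw [h, mul_zero] at hNq; omega
    · exact h
  have hdiv : (N - 1) / p ^ t = q - 1 := by
    rw [hNq]; exact div_mul_pred (pow_pos hp.pos _) hq0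
  have hnd : ¬ p ∣ q := not_dvd_div_pow hp hN
  rw [dig, hdiv, pred_mod hp.two_le hnd]
  simp [dig, hq]

lemma dig_pred_of_gt {N j : ℕ} (hN : N ≠ 0) (hj : padicValNat p N < j) :
    dig p (N - 1) j = dig p N j := by
  haveI : Fact p.Prime := ⟨hp⟩
  have hnd : ¬ p ^ j ∣ N := by
    intro hc
    exact pow_succ_padicValNat_not_dvd hN
      (dvd_trans (pow_dvd_pow p (by omega)) hc)
  have h1 : N / p ^ j = (N - 1) / p ^ j := by
    have h2 : (N - 1 + 1) / p ^ j = (N - 1) / p ^ j + if p ^ j ∣ N - 1 + 1 then 1 else 0 :=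
      Nat.succ_div
    have h3 : N - 1 + 1 = N := by omega
    rw [h3] at h2
    simp only [hnd, if_false] at h2
    omega
  rw [dig, dig, h1]

lemma dig_pow {j' j : ℕ} : dig p (p ^ j) j' = if j' = j then 1 else 0 := by
  rcases lt_trichotomy j' j with h | h | h
  · have : p ^ j / p ^ j' = p * p ^ (j - j' - 1) := by
      rw [Nat.pow_div h.le hp.pos, ← pow_succ']
      congr 1
      omega
    simp [dig, this, Nat.mul_mod_right, h.ne]
  · subst h
    simp [dig, Nat.div_self (pow_pos hp.pos _), Nat.mod_eq_of_lt hp.one_lt]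
  · have : p ^ j / p ^ j' = 0 :=
      Nat.div_eq_of_lt (Nat.pow_lt_pow_right hp.one_lt h)
    simp [dig, this, h.ne']

lemma dig_top {m j : ℕ} (hj : j < m) : dig p (p ^ m - 1) j = p - 1 := by
  have hkey : p ^ m = p ^ j * p ^ (m - j) := by rw [← pow_add]; congr 1; omega
  have hdiv : (p ^ m - 1) / p ^ j = p ^ (m - j) - 1 := by
    rw [hkey]; exact div_mul_pred (pow_pos hp.pos _) (pow_pos hp.pos _)
  have hmul : p ^ (m - j) = p * p ^ (m - j - 1) := by
    rw [← pow_succ']; congr 1; omega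
  rw [dig, hdiv, hmul, mul_pred_mod hp.two_le (pow_pos hp.pos _)]

lemma padicValNat_pow_self (j : ℕ) : padicValNat p (p ^ j) = j := by
  haveI : Fact p.Prime := ⟨hp⟩
  exact padicValNat.prime_pow j

lemma lo_mul_p {u : ℕ} (hu : u ≠ 0) : lo p (p * u) = lo p u := by
  haveI : Fact p.Prime := ⟨hp⟩
  have hv : padicValNat p (p * u) = 1 + padicValNat p u := by
    rw [padicValNat.mul hp.ne_zero hu, padicValNat.self hp.one_lt]
  have hd : (p * u) / p ^ (1 + padicValNat p u) = u / p ^ padicValNat p u := by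
    rw [pow_add, pow_one, Nat.mul_div_mul_left _ _ hp.pos]
  rw [lo, lo, hv, dig, dig, hd]

omit hp in
lemma lo_of_not_dvd {u : ℕ} (h : ¬ p ∣ u) : lo p u = u % p := by
  have hv : padicValNat p u = 0 := padicValNat.eq_zero_of_not_dvd h
  rw [lo, hv, dig, pow_zero, Nat.div_one]

lemma lo_one : lo p 1 = 1 := by
  rw [lo_of_not_dvd (show ¬ p ∣ 1 by simpa using hp.one_lt.ne'), Nat.mod_eq_of_lt hp.one_lt]


section Wilson

variable {k : Type*} [Field k] [CharP k p]

lemma factorial_cast_eq_neg_one : (((p - 1)! : ℕ) : k) = -1 := by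
  haveI : Fact p.Prime := ⟨hp⟩
  have h1 : (((p - 1)! : ℕ) : k) = ZMod.castHom (dvd_refl p) k (((p - 1)! : ℕ) : ZMod p) := by
    rw [map_natCast]
  rw [h1, ZMod.wilsons_lemma, map_neg, map_one]

lemma prod_Ioc_pred_cast : (∏ r ∈ Ioc 0 (p - 1), ((r : ℕ) : k)) = -1 := by
  have h0 : Ioc 0 (p - 1) = Ico 1 ((p - 1) + 1) := by
    ext a; simp only [mem_Ioc, mem_Ico]; omega
  rw [← Nat.cast_prod, h0, Finset.prod_Ico_id_eq_factorial, factorial_cast_eq_neg_one hp]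

lemma prod_lo_mul (M : ℕ) :
    (∏ u ∈ Ioc 0 (M * p), ((lo p u : ℕ) : k)) =
      (-1) ^ M * ∏ u ∈ Ioc 0 M, ((lo p u : ℕ) : k) := by
  induction M with
  | zero => simp
  | succ M ih =>
    have hsucc : (M + 1) * p = M * p + p := by ring
    have hsplit := Finset.prod_Ioc_consecutive (fun u => ((lo p u : ℕ) : k))
      (Nat.zero_le (M * p)) (Nat.le_add_right (M * p) p)
    have hblock : (∏ u ∈ Ioc (M * p) (M * p + p), ((lo p u : ℕ) : k)) =
        ∏ r ∈ Ioc 0 p, ((lo p (M * p + r) : ℕ) : k) := by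
      have h0 : Ioc (M * p) (M * p + p) = Ioc (M * p + 0) (M * p + p) := by rw [add_zero]
      rw [h0, ← map_add_left_Ioc 0 p (M * p), Finset.prod_map]
      simp [addLeftEmbedding]
    have hp1 : p - 1 + 1 = p := by have := hp.pos; omega
    have htop : (∏ r ∈ Ioc 0 p, ((lo p (M * p + r) : ℕ) : k)) =
        (∏ r ∈ Ioc 0 (p - 1), ((lo p (M * p + r) : ℕ) : k)) *
          ((lo p (M * p + p) : ℕ) : k) := by
      rw [← hp1, Finset.prod_Ioc_succ_top (Nat.zero_le _)]
      rw [hp1]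
    have hlow : (∏ r ∈ Ioc 0 (p - 1), ((lo p (M * p + r) : ℕ) : k)) =
        ∏ r ∈ Ioc 0 (p - 1), ((r : ℕ) : k) := by
      apply Finset.prod_congr rfl
      intro r hr
      rw [mem_Ioc] at hr
      have hrp : r < p := by omega
      have hmod : (M * p + r) % p = r := by
        rw [add_comm, Nat.add_mul_mod_self_right, Nat.mod_eq_of_lt hrp]
      have hnd : ¬ p ∣ M * p + r := by
        rw [Nat.dvd_iff_mod_eq_zero, hmod]; omega
      rw [lo_of_not_dvd hnd, hmod]
    have hlast : lo p (M * p + p) = lo p (M + 1) := by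
      have : M * p + p = p * (M + 1) := by ring
      rw [this, lo_mul_p hp (Nat.succ_ne_zero M)]
    have hfin : (∏ u ∈ Ioc 0 (M + 1), ((lo p u : ℕ) : k)) =
        (∏ u ∈ Ioc 0 M, ((lo p u : ℕ) : k)) * ((lo p (M + 1) : ℕ) : k) :=
      Finset.prod_Ioc_succ_top (Nat.zero_le _) _
    rw [hsucc, ← hsplit, hblock, htop, hlow, prod_Ioc_pred_cast hp, hlast, ih, hfin]
    ring

lemma prod_lo_pow (hodd : Odd p) (i : ℕ) :
    (∏ u ∈ Ioc 0 (p ^ i), ((lo p u : ℕ) : k)) = (-1) ^ i := by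
  induction i with
  | zero =>
    have h : Ioc 0 1 = ({1} : Finset ℕ) := by ext a; simp only [mem_Ioc, mem_singleton]; omega
    simp [h, lo_one hp]
  | succ i ih =>
    rw [pow_succ, prod_lo_mul hp, ih]
    have : ((-1 : k)) ^ (p ^ i) = -1 := Odd.neg_one_pow (hodd.pow)
    rw [this]
    ring

end Wilson

end Arith

section Alg

variable (k : Type*) [Field k] {B : Type*} [CommRing B] [Algebra k B]
variable {p m : ℕ}

/-- the monomial corresponding to `N` written in base `p` -/
def vv (x : Fin m → B) (p N : ℕ) : B := ∏ j : Fin m, x j ^ (dig p N (j : ℕ))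

/-- the filtration submodules -/
def Jf (x : Fin m → B) (p s : ℕ) : Submodule k B :=
  Submodule.span k {y | ∃ M, s ≤ M ∧ M < p ^ m ∧ vv x p M = y}

variable {k}

lemma der_sum_apply {ι : Type*} (s : Finset ι) (f : ι → Derivation k B B) (a : B) :
    (∑ i ∈ s, f i) a = ∑ i ∈ s, f i a := by
  induction s using Finset.cons_induction with
  | empty => simp
  | cons i s hi ih => rw [Finset.sum_cons, Derivation.add_apply, ih, Finset.sum_cons]

lemma Jf_mono {x : Fin m → B} {s s' : ℕ} (h : s ≤ s') : Jf k x p s' ≤ Jf k x p s :=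
  Submodule.span_mono (fun y ⟨M, h1, h2, h3⟩ => ⟨M, le_trans h h1, h2, h3⟩)

lemma vv_mem_Jf {x : Fin m → B} {s M : ℕ} (h1 : s ≤ M) (h2 : M < p ^ m) :
    vv x p M ∈ Jf k x p s :=
  Submodule.subset_span ⟨M, h1, h2, rfl⟩

lemma vv_zero {x : Fin m → B} : vv x p 0 = 1 := by
  simp [vv, dig]

section WithHyp

variable {x : Fin m → B} {D : Fin m → Derivation k B B}
variable (hp : p.Prime) (hxp : ∀ j, x j ^ p = 0)
variable (hD : ∀ i j, D i (x j) = if i = j then 1 else 0)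

omit hp hxp in
include hD in
lemma D_apply_vv (i : Fin m) (N : ℕ) :
    D i (vv x p N) = dig p N (i : ℕ) •
      (x i ^ (dig p N (i : ℕ) - 1) * ∏ j ∈ Finset.univ.erase i, x j ^ dig p N (j : ℕ)) := by
  have h0 : vv x p N =
      x i ^ dig p N (i : ℕ) * ∏ j ∈ Finset.univ.erase i, x j ^ dig p N (j : ℕ) :=
    (Finset.mul_prod_erase _ _ (Finset.mem_univ i)).symm
  have hz : D i (∏ j ∈ Finset.univ.erase i, x j ^ dig p N (j : ℕ)) = 0 := by
    refine Finset.prod_induction _ (fun y => D i y = 0) ?_ (Derivation.map_one_eq_zero _) ?_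
    · intro a b ha hb
      rw [Derivation.leibniz, ha, hb, smul_zero, smul_zero, add_zero]
    · intro j hj
      have hne : i ≠ j := fun h => (Finset.mem_erase.mp hj).1 h.symm
      rw [Derivation.leibniz_pow, hD i j, if_neg hne, smul_zero, smul_zero]
  rw [h0, Derivation.leibniz, hz, smul_zero, zero_add, Derivation.leibniz_pow,
    hD i i, if_pos rfl]
  simp only [smul_eq_mul, mul_one]
  ring

omit hD in
include hp hxp in
lemma top_mul_mem (hadj : Algebra.adjoin k (Set.range x) = ⊤) (y : B) :
    (∏ j : Fin m, x j ^ (p - 1)) * y ∈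
      Submodule.span k {∏ j : Fin m, x j ^ (p - 1)} := by
  have hy : y ∈ Algebra.adjoin k (Set.range x) := by rw [hadj]; trivial
  induction hy using Algebra.adjoin_induction with
  | mem z hz =>
    obtain ⟨j, rfl⟩ := hz
    have hdvd : x j ^ (p - 1) * x j ∣ (∏ j : Fin m, x j ^ (p - 1)) * x j :=
      mul_dvd_mul (Finset.dvd_prod_of_mem _ (Finset.mem_univ j)) dvd_rfl
    have hpow : x j ^ (p - 1) * x j = 0 := by
      have h1 : x j ^ (p - 1) * x j = x j ^ p := by
        rw [← pow_succ]
        congr 1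
        have := hp.pos
        omega
      rw [h1, hxp j]
    rw [hpow, zero_dvd_iff] at hdvd
    rw [hdvd]
    exact Submodule.zero_mem _
  | algebraMap r =>
    have h1 : (∏ j : Fin m, x j ^ (p - 1)) * algebraMap k B r =
        r • (∏ j : Fin m, x j ^ (p - 1)) := by
      rw [Algebra.smul_def, mul_comm]
    rw [h1]
    exact Submodule.smul_mem _ _ (Submodule.mem_span_singleton_self _)
  | add y z _ _ hy' hz' =>
    rw [mul_add]
    exact Submodule.add_mem _ hy' hz'
  | mul y z _ _ hy' hz' =>
    obtain ⟨c, hc⟩ := Submodule.mem_span_singleton.mp hy'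
    have h1 : (∏ j : Fin m, x j ^ (p - 1)) * (y * z) =
        c • ((∏ j : Fin m, x j ^ (p - 1)) * z) := by
      rw [← mul_assoc, ← hc, smul_mul_assoc]
    rw [h1]
    exact Submodule.smul_mem _ _ hz'

omit hxp hD in
include hp in
lemma vv_top : vv x p (p ^ m - 1) = ∏ j : Fin m, x j ^ (p - 1) :=
  Finset.prod_congr rfl fun j _ => by rw [dig_top hp j.isLt]

omit hxp hD in
include hp in
lemma vv_pow (j : Fin m) : vv x p (p ^ (j : ℕ)) = x j := by
  rw [vv]
  rw [Finset.prod_eq_single j]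
  · rw [dig_pow hp, if_pos rfl, pow_one]
  · intro j' _ hne
    rw [dig_pow hp, if_neg (fun h => hne (Fin.ext h)), pow_zero]
  · intro h
    exact absurd (Finset.mem_univ j) h

include hp in
lemma prod_identity {N : ℕ} (hN0 : N ≠ 0) (htm : padicValNat p N < m) :
    (∏ j ∈ Finset.univ.filter (fun j : Fin m => j < (⟨padicValNat p N, htm⟩ : Fin m)),
        x j ^ (p - 1)) *
      (x ⟨padicValNat p N, htm⟩ ^ (dig p N (padicValNat p N) - 1) *
        ∏ j ∈ Finset.univ.erase (⟨padicValNat p N, htm⟩ : Fin m), x j ^ dig p N (j : ℕ))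
      = vv x p (N - 1) := by
  set t := padicValNat p N with htdef
  set tF : Fin m := ⟨t, htm⟩ with htF
  have e1 : (∏ j ∈ Finset.univ.filter (fun j : Fin m => j < tF), x j ^ (p - 1))
      = ∏ j : Fin m, x j ^ (if j < tF then p - 1 else 0) := by
    rw [Finset.prod_filter]
    exact Finset.prod_congr rfl fun j _ => by split_ifs <;> simp
  have e2 : x tF ^ (dig p N t - 1)
      = ∏ j : Fin m, x j ^ (if j = tF then dig p N t - 1 else 0) := by
    rw [Finset.prod_eq_single tF]
    · rw [if_pos rfl]
    · intro j' _ hne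
      rw [if_neg hne, pow_zero]
    · intro h
      exact absurd (Finset.mem_univ tF) h
  have e3 : (∏ j ∈ Finset.univ.erase tF, x j ^ dig p N (j : ℕ))
      = ∏ j : Fin m, x j ^ (if j = tF then 0 else dig p N (j : ℕ)) := by
    rw [← Finset.mul_prod_erase Finset.univ _ (Finset.mem_univ tF), if_pos rfl, pow_zero,
      one_mul]
    exact (Finset.prod_congr rfl fun j hj => by
      rw [if_neg (Finset.mem_erase.mp hj).1]).symm
  rw [e1, e2, e3, ← Finset.prod_mul_distrib, ← Finset.prod_mul_distrib, vv]
  refine Finset.prod_congr rfl fun j _ => ?_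
  rw [← pow_add, ← pow_add]
  congr 1
  rcases lt_trichotomy ((j : ℕ)) t with h | h | h
  · have c1 : j < tF := Fin.lt_def.mpr h
    have c2 : j ≠ tF := fun hc => by
      have := congrArg Fin.val hc; simp only [htF] at this; omega
    rw [if_pos c1, if_neg c2, if_neg c2, dig_pred_of_lt hp hN0 h,
      dig_eq_zero_of_lt hp hN0 h]
    omega
  · have c2 : j = tF := Fin.ext h
    have c1 : ¬ j < tF := by rw [Fin.lt_def]; omega
    rw [if_neg c1, if_pos c2, if_pos c2, h, dig_pred_at_val hp hN0]
    simp only [← htdef]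
    omega
  · have c1 : ¬ j < tF := by
      rw [Fin.lt_def]; show ¬ (j : ℕ) < t; omega
    have c2 : j ≠ tF := fun hc => by
      have := congrArg Fin.val hc; simp only [htF] at this; omega
    rw [if_neg c1, if_neg c2, if_neg c2, dig_pred_of_gt hp hN0 h]
    omega

include hp hxp in
lemma term_zero_of_gt {N : ℕ} (hN0 : N ≠ 0) (htm : padicValNat p N < m) (i : Fin m)
    (hgt : padicValNat p N < (i : ℕ)) :
    (∏ j ∈ Finset.univ.filter (fun j : Fin m => j < i), x j ^ (p - 1)) *
      (x i ^ (dig p N (i : ℕ) - 1) * ∏ j ∈ Finset.univ.erase i, x j ^ dig p N (j : ℕ)) = 0 := by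
  set t := padicValNat p N with htdef
  set tF : Fin m := ⟨t, htm⟩ with htF
  have hdt : dig p N t ≠ 0 := dig_ne_zero_at_val hp hN0
  have hd1 : x tF ^ (p - 1) ∣ ∏ j ∈ Finset.univ.filter (fun j : Fin m => j < i), x j ^ (p - 1) :=
    Finset.dvd_prod_of_mem _ (Finset.mem_filter.mpr ⟨Finset.mem_univ _, Fin.lt_def.mpr hgt⟩)
  have hd2 : x tF ^ dig p N t ∣ ∏ j ∈ Finset.univ.erase i, x j ^ dig p N (j : ℕ) :=
    Finset.dvd_prod_of_mem (fun j => x j ^ dig p N (j : ℕ))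
      (Finset.mem_erase.mpr ⟨fun hc => by
        have := congrArg Fin.val hc; simp only [htF] at this; omega, Finset.mem_univ _⟩)
  have hzero : x tF ^ (p - 1) * x tF ^ dig p N t = 0 := by
    rw [← pow_add, show p - 1 + dig p N t = p + (dig p N t - 1) by
      have := hp.pos; omega, pow_add, hxp, zero_mul]
  have hdvd := mul_dvd_mul hd1 hd2
  rw [hzero, zero_dvd_iff] at hdvd
  rw [mul_left_comm, hdvd, mul_zero]

include hp hxp hD in
lemma Delta_vv (hadj : Algebra.adjoin k (Set.range x) = ⊤)
    (ε : Fin m → k) (Δε : Derivation k B B)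
    (hΔε : Δε = (∑ i : Fin m,
        (∏ j ∈ Finset.univ.filter (fun j : Fin m => j < i), x j ^ (p - 1)) • D i)
      + ∑ i : Fin m, ((-1 : k) ^ (m - (i : ℕ)) * ε i) • ((∏ j : Fin m, x j ^ (p - 1)) • D i))
    {N : ℕ} (h1 : 1 ≤ N) (h2 : N < p ^ m) :
    Δε (vv x p N) - ((lo p N : ℕ) : k) • vv x p (N - 1) ∈ Jf k x p (p ^ m - 1) := by
  have hN0 : N ≠ 0 := by omega
  have htm : padicValNat p N < m := padicValNat_lt_of_lt_pow hp hN0 h2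
  set t := padicValNat p N with htdef
  set tF : Fin m := ⟨t, htm⟩ with htF
  have claim1 : (∑ i : Fin m,
      (∏ j ∈ Finset.univ.filter (fun j : Fin m => j < i), x j ^ (p - 1)) • D i) (vv x p N)
      = ((lo p N : ℕ) : k) • vv x p (N - 1) := by
    rw [der_sum_apply]
    rw [Finset.sum_eq_single tF]
    · rw [Derivation.smul_apply, D_apply_vv hD, smul_eq_mul, mul_smul_comm,
        show (tF : ℕ) = t from rfl, prod_identity hp hN0 htm]
      rw [lo, ← htdef, Nat.cast_smul_eq_nsmul]
    · intro i _ hne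
      rcases lt_trichotomy ((i : ℕ)) t with h | h | h
      · rw [Derivation.smul_apply, D_apply_vv hD, dig_eq_zero_of_lt hp hN0 h,
          zero_smul, smul_zero]
      · exact absurd (Fin.ext (h.trans rfl)) hne
      · rw [Derivation.smul_apply, D_apply_vv hD, smul_eq_mul, mul_smul_comm,
          term_zero_of_gt hp hxp hN0 htm i h, smul_zero]
    · intro h
      exact absurd (Finset.mem_univ tF) h
  have hJtop : Submodule.span k {∏ j : Fin m, x j ^ (p - 1)} ≤ Jf k x p (p ^ m - 1) := by
    rw [Submodule.span_le, Set.singleton_subset_iff, ← vv_top hp]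
    have hpm : 1 ≤ p ^ m := Nat.one_le_pow _ _ hp.pos
    exact vv_mem_Jf le_rfl (by omega)
  have claim2 : (∑ i : Fin m, ((-1 : k) ^ (m - (i : ℕ)) * ε i) •
      ((∏ j : Fin m, x j ^ (p - 1)) • D i)) (vv x p N) ∈ Jf k x p (p ^ m - 1) := by
    rw [der_sum_apply]
    refine Submodule.sum_mem _ fun i _ => ?_
    rw [Derivation.smul_apply, Derivation.smul_apply, smul_eq_mul]
    exact Submodule.smul_mem _ _ (hJtop (top_mul_mem hp hxp hadj _))
  have happ : Δε (vv x p N) = ((lo p N : ℕ) : k) • vv x p (N - 1) +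
      (∑ i : Fin m, ((-1 : k) ^ (m - (i : ℕ)) * ε i) •
        ((∏ j : Fin m, x j ^ (p - 1)) • D i)) (vv x p N) := by
    rw [hΔε, Derivation.add_apply, claim1]
  rw [happ, add_sub_cancel_left]
  exact claim2

variable {ε : Fin m → k} {Δε : Derivation k B B}

include hp hxp hD in
lemma Jf_step (hadj : Algebra.adjoin k (Set.range x) = ⊤)
    (hΔε : Δε = (∑ i : Fin m,
        (∏ j ∈ Finset.univ.filter (fun j : Fin m => j < i), x j ^ (p - 1)) • D i)
      + ∑ i : Fin m, ((-1 : k) ^ (m - (i : ℕ)) * ε i) • ((∏ j : Fin m, x j ^ (p - 1)) • D i))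
    (s : ℕ) {y : B} (hy : y ∈ Jf k x p s) : (Δε : B →ₗ[k] B) y ∈ Jf k x p (s - 1) := by
  have hle : Jf k x p s ≤ (Jf k x p (s - 1)).comap (Δε : B →ₗ[k] B) := by
    rw [Jf, Submodule.span_le]
    rintro y ⟨M, hsM, hM, rfl⟩
    simp only [SetLike.mem_coe, Submodule.mem_comap, Derivation.coeFn_coe]
    by_cases hM0 : M = 0
    · subst hM0
      rw [vv_zero, Derivation.map_one_eq_zero]
      exact Submodule.zero_mem _
    · have hd := Delta_vv hp hxp hD hadj ε Δε hΔε (by omega : 1 ≤ M) hM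
      have heq : Δε (vv x p M) =
          (Δε (vv x p M) - ((lo p M : ℕ) : k) • vv x p (M - 1)) +
            ((lo p M : ℕ) : k) • vv x p (M - 1) := (sub_add_cancel _ _).symm
      rw [heq]
      refine Submodule.add_mem _ (Jf_mono (by omega) hd) ?_
      exact Submodule.smul_mem _ _ (vv_mem_Jf (by omega) (by omega))
  exact hle hy

include hp hxp hD in
lemma Jf_iter (hadj : Algebra.adjoin k (Set.range x) = ⊤)
    (hΔε : Δε = (∑ i : Fin m,
        (∏ j ∈ Finset.univ.filter (fun j : Fin m => j < i), x j ^ (p - 1)) • D i)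
      + ∑ i : Fin m, ((-1 : k) ^ (m - (i : ℕ)) * ε i) • ((∏ j : Fin m, x j ^ (p - 1)) • D i))
    (t s : ℕ) {y : B} (hy : y ∈ Jf k x p s) :
    (((Δε : B →ₗ[k] B)) ^ t) y ∈ Jf k x p (s - t) := by
  induction t with
  | zero => simpa using hy
  | succ t ih =>
    rw [_root_.pow_succ', Module.End.mul_apply]
    have := Jf_step hp hxp hD hadj hΔε (s - t) ih
    rwa [show s - t - 1 = s - (t + 1) by omega] at this

include hp hxp hD in
lemma Mlem (hadj : Algebra.adjoin k (Set.range x) = ⊤)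
    (hΔε : Δε = (∑ i : Fin m,
        (∏ j ∈ Finset.univ.filter (fun j : Fin m => j < i), x j ^ (p - 1)) • D i)
      + ∑ i : Fin m, ((-1 : k) ^ (m - (i : ℕ)) * ε i) • ((∏ j : Fin m, x j ^ (p - 1)) • D i))
    (t N : ℕ) (htN : t ≤ N) (h2 : N < p ^ m) :
    (((Δε : B →ₗ[k] B)) ^ t) (vv x p N) -
      (∏ u ∈ Finset.Ioc (N - t) N, ((lo p u : ℕ) : k)) • vv x p (N - t) ∈
        Jf k x p (p ^ m - t) := by
  induction t with
  | zero =>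
    simp only [pow_zero, Module.End.one_apply, Nat.sub_zero, Finset.Ioc_self,
      Finset.prod_empty, one_smul, sub_self]
    exact Submodule.zero_mem _
  | succ t ih =>
    have iht := ih (by omega)
    set C := ∏ u ∈ Finset.Ioc (N - t) N, ((lo p u : ℕ) : k) with hC
    set w := (((Δε : B →ₗ[k] B)) ^ t) (vv x p N) - C • vv x p (N - t) with hw
    have hwm : w ∈ Jf k x p (p ^ m - t) := iht
    have hXt : (((Δε : B →ₗ[k] B)) ^ t) (vv x p N) = C • vv x p (N - t) + w := by
      rw [hw]; ring
    have hsplit : (((Δε : B →ₗ[k] B)) ^ (t + 1)) (vv x p N) =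
        C • (Δε (vv x p (N - t))) + (Δε : B →ₗ[k] B) w := by
      rw [_root_.pow_succ', Module.End.mul_apply, hXt, map_add, map_smul, Derivation.coeFn_coe]
    have hw1 : (Δε : B →ₗ[k] B) w ∈ Jf k x p (p ^ m - (t + 1)) := by
      have := Jf_step hp hxp hD hadj hΔε (p ^ m - t) hwm
      rwa [show p ^ m - t - 1 = p ^ m - (t + 1) by omega] at this
    have hvd := Delta_vv hp hxp hD hadj ε Δε hΔε (by omega : 1 ≤ N - t)
      (by omega : N - t < p ^ m)
    have hC' : (∏ u ∈ Finset.Ioc (N - (t + 1)) N, ((lo p u : ℕ) : k)) =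
        ((lo p (N - t) : ℕ) : k) * C := by
      have hins : Finset.Ioc (N - (t + 1)) N =
          insert (N - t) (Finset.Ioc (N - t) N) := by
        ext a
        simp only [Finset.mem_Ioc, Finset.mem_insert]
        omega
      rw [hins, Finset.prod_insert (by simp)]
    have heq : (((Δε : B →ₗ[k] B)) ^ (t + 1)) (vv x p N) -
        (∏ u ∈ Finset.Ioc (N - (t + 1)) N, ((lo p u : ℕ) : k)) • vv x p (N - (t + 1)) =
        C • (Δε (vv x p (N - t)) - ((lo p (N - t) : ℕ) : k) • vv x p (N - t - 1)) +
          (Δε : B →ₗ[k] B) w := by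
      rw [hsplit, hC', show N - (t + 1) = N - t - 1 by omega]
      rw [smul_sub, smul_smul, mul_comm C _]
      ring
    rw [heq]
    exact Submodule.add_mem _
      (Submodule.smul_mem _ _ (Jf_mono (by omega) hvd)) hw1

omit hp hxp hD in
lemma pow_apply_one_eq_zero {r : ℕ} (hr : 1 ≤ r) : (((Δε : B →ₗ[k] B)) ^ r) (1 : B) = 0 := by
  obtain ⟨s, rfl⟩ : ∃ s, r = s + 1 := ⟨r - 1, by omega⟩
  rw [pow_succ, Module.End.mul_apply, Derivation.coeFn_coe, Derivation.map_one_eq_zero,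
    map_zero]

include hp hxp hD in
lemma Epow_mem [CharP k p] (hodd : Odd p) (hadj : Algebra.adjoin k (Set.range x) = ⊤)
    (hΔε : Δε = (∑ i : Fin m,
        (∏ j ∈ Finset.univ.filter (fun j : Fin m => j < i), x j ^ (p - 1)) • D i)
      + ∑ i : Fin m, ((-1 : k) ^ (m - (i : ℕ)) * ε i) • ((∏ j : Fin m, x j ^ (p - 1)) • D i))
    (i j : Fin m) :
    (((Δε : B →ₗ[k] B)) ^ (p ^ (i : ℕ))) (x j) -
      ((-1 : k) ^ (i : ℕ)) • (if i = j then (1 : B) else 0) ∈ Jf k x p 1 := by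
  have hpim : p ^ (i : ℕ) < p ^ m := Nat.pow_lt_pow_right hp.one_lt i.isLt
  have hpjm : p ^ (j : ℕ) < p ^ m := Nat.pow_lt_pow_right hp.one_lt j.isLt
  have hxj : x j = vv x p (p ^ (j : ℕ)) := (vv_pow hp j).symm
  rcases lt_trichotomy ((i : ℕ)) ((j : ℕ)) with h | h | h
  · -- i < j
    have hne : i ≠ j := fun hc => by rw [hc] at h; omega
    have hple : p ^ (i : ℕ) < p ^ (j : ℕ) := Nat.pow_lt_pow_right hp.one_lt h
    rw [if_neg hne, smul_zero, sub_zero, hxj]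
    have hM := Mlem hp hxp hD hadj hΔε (p ^ (i : ℕ)) (p ^ (j : ℕ)) hple.le hpjm
    have heq : (((Δε : B →ₗ[k] B)) ^ (p ^ (i : ℕ))) (vv x p (p ^ (j : ℕ))) =
        ((((Δε : B →ₗ[k] B)) ^ (p ^ (i : ℕ))) (vv x p (p ^ (j : ℕ))) -
          (∏ u ∈ Finset.Ioc (p ^ (j : ℕ) - p ^ (i : ℕ)) (p ^ (j : ℕ)),
            ((lo p u : ℕ) : k)) • vv x p (p ^ (j : ℕ) - p ^ (i : ℕ))) +
          (∏ u ∈ Finset.Ioc (p ^ (j : ℕ) - p ^ (i : ℕ)) (p ^ (j : ℕ)),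
            ((lo p u : ℕ) : k)) • vv x p (p ^ (j : ℕ) - p ^ (i : ℕ)) :=
      (sub_add_cancel _ _).symm
    rw [heq]
    refine Submodule.add_mem _ (Jf_mono (by omega) hM) ?_
    exact Submodule.smul_mem _ _ (vv_mem_Jf (by omega) (by omega))
  · -- i = j
    have heqij : i = j := Fin.ext h
    rw [if_pos heqij, hxj, ← h]
    have hM := Mlem hp hxp hD hadj hΔε (p ^ (i : ℕ)) (p ^ (i : ℕ)) le_rfl hpim
    rw [Nat.sub_self, vv_zero, prod_lo_pow hp hodd] at hM
    exact Jf_mono (by omega) hM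
  · -- i > j
    have hne : i ≠ j := fun hc => by rw [hc] at h; omega
    have hple : p ^ (j : ℕ) < p ^ (i : ℕ) := Nat.pow_lt_pow_right hp.one_lt h
    rw [if_neg hne, smul_zero, sub_zero, hxj]
    have hdecomp : ((Δε : B →ₗ[k] B)) ^ (p ^ (i : ℕ)) =
        (((Δε : B →ₗ[k] B)) ^ (p ^ (i : ℕ) - p ^ (j : ℕ))) *
          (((Δε : B →ₗ[k] B)) ^ (p ^ (j : ℕ))) := by
      rw [← pow_add]
      congr 1
      omega
    rw [hdecomp, Module.End.mul_apply]
    have hM := Mlem hp hxp hD hadj hΔε (p ^ (j : ℕ)) (p ^ (j : ℕ)) le_rfl hpjm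
    rw [Nat.sub_self, vv_zero] at hM
    set Cj := ∏ u ∈ Finset.Ioc 0 (p ^ (j : ℕ)), ((lo p u : ℕ) : k) with hCj
    have hXj : (((Δε : B →ₗ[k] B)) ^ (p ^ (j : ℕ))) (vv x p (p ^ (j : ℕ))) =
        Cj • (1 : B) + ((((Δε : B →ₗ[k] B)) ^ (p ^ (j : ℕ))) (vv x p (p ^ (j : ℕ))) -
          Cj • (1 : B)) := by ring
    rw [hXj, map_add, map_smul, pow_apply_one_eq_zero (by omega), smul_zero, zero_add]
    have := Jf_iter hp hxp hD hadj hΔε (p ^ (i : ℕ) - p ^ (j : ℕ)) (p ^ m - p ^ (j : ℕ)) hM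
    rw [show p ^ m - p ^ (j : ℕ) - (p ^ (i : ℕ) - p ^ (j : ℕ)) = p ^ m - p ^ (i : ℕ)
      by omega] at this
    exact Jf_mono (by omega) this

include hp in
lemma Jf_one_le :
    Jf k x p 1 ≤ Submodule.restrictScalars k
      ((Ideal.span (Set.range x)).restrictScalars B) := by
  rw [Jf, Submodule.span_le]
  rintro y ⟨M, h1M, hM, rfl⟩
  have hM0 : M ≠ 0 := by omega
  have htm : padicValNat p M < m := padicValNat_lt_of_lt_pow hp hM0 hM
  have hdvd : x ⟨padicValNat p M, htm⟩ ∣ vv x p M :=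
    dvd_trans (dvd_pow_self _ (dig_ne_zero_at_val hp hM0))
      (Finset.dvd_prod_of_mem (fun j : Fin m => x j ^ dig p M (j : ℕ)) (Finset.mem_univ _))
  obtain ⟨c, hc⟩ := hdvd
  simp only [SetLike.mem_coe, Submodule.restrictScalars_mem]
  rw [hc]
  exact Ideal.mul_mem_right _ _ (Ideal.subset_span ⟨_, rfl⟩)

end WithHyp

end Alg

end DeltaAux

open DeltaAux in
/-- For `Δ_ε = Δ + x_1^{p-1}⋯x_{n-1}^{p-1} Σ_{i=1}^{n-1} (−1)^{n−i} ε_i D_i ∈ W_{n-1}`, the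
powers `Δ_ε^{p^i}` for `i = 0,...,n−2` satisfy `Δ_ε^{p^i} ≡ (−1)^i D_{i+1}` modulo
`m·W_{n-1}`, and thus form a basis of `W_{n-1}` as a free `B_{n-1}`-module.
Here `m` plays the role of `n − 1`. -/
theorem Delta_eps_powers_basis
    (k : Type*) [Field k] [IsAlgClosed k] (p m : ℕ) [Fact (Nat.Prime p)] [CharP k p]
    (hp : 3 < p) (hm : 2 ≤ m)
    (B : Type*) [CommRing B] [Algebra k B]
    (e : (MvPolynomial (Fin m) k ⧸
        Ideal.span (Set.range fun i : Fin m =>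
          (MvPolynomial.X i : MvPolynomial (Fin m) k) ^ p)) ≃ₐ[k] B)
    (x : Fin m → B) (hx : ∀ j, x j = e (Ideal.Quotient.mk _ (MvPolynomial.X j)))
    (D : Fin m → Derivation k B B) (hD : ∀ i j, D i (x j) = if i = j then 1 else 0)
    (b : Module.Basis (Fin m) B (Derivation k B B)) (hb : ∀ i, b i = D i)
    (ε : Fin m → k)
    (Δε : Derivation k B B)
    (hΔε : Δε = (∑ i : Fin m,
        (∏ j ∈ Finset.univ.filter (fun j : Fin m => j < i), x j ^ (p - 1)) • D i)
      + ∑ i : Fin m, ((-1 : k) ^ (m - (i : ℕ)) * ε i) • ((∏ j : Fin m, x j ^ (p - 1)) • D i))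
    (E : Fin m → Derivation k B B)
    (hE : ∀ i, ((E i : B →ₗ[k] B)) = (Δε : B →ₗ[k] B) ^ (p ^ (i : ℕ))) :
    (∀ i j : Fin m,
        b.repr (E i - ((-1 : k) ^ (i : ℕ)) • D i) j ∈ Ideal.span (Set.range x)) ∧
      ∃ c : Module.Basis (Fin m) B (Derivation k B B), ∀ i, c i = E i := by
  classical
  have hPrime : p.Prime := Fact.out
  have hodd : Odd p := hPrime.odd_of_ne_two (by omega)
  -- the generators are nilpotent of exponent `p`
  have hxp : ∀ j, x j ^ p = 0 := by
    intro j
    have h0 : (Ideal.Quotient.mk (Ideal.span (Set.range fun i : Fin m =>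
        (MvPolynomial.X i : MvPolynomial (Fin m) k) ^ p))
          (MvPolynomial.X j : MvPolynomial (Fin m) k)) ^ p = 0 := by
      rw [← map_pow, Ideal.Quotient.eq_zero_iff_mem]
      exact Ideal.subset_span ⟨j, rfl⟩
    rw [hx j, ← map_pow, h0, map_zero]
  -- the generators generate `B`
  have hadj : Algebra.adjoin k (Set.range x) = ⊤ := by
    have hxeq : x = (e.toAlgHom.comp (Ideal.Quotient.mkₐ k
        (Ideal.span (Set.range fun i : Fin m =>
          (MvPolynomial.X i : MvPolynomial (Fin m) k) ^ p)))) ∘ MvPolynomial.X := by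
      funext j
      rw [hx j]
      rfl
    have hsurj : Function.Surjective (e.toAlgHom.comp (Ideal.Quotient.mkₐ k
        (Ideal.span (Set.range fun i : Fin m =>
          (MvPolynomial.X i : MvPolynomial (Fin m) k) ^ p)))) :=
      e.surjective.comp Ideal.Quotient.mk_surjective
    rw [hxeq, Set.range_comp, ← AlgHom.map_adjoin, MvPolynomial.adjoin_range_X,
      Algebra.map_top]
    exact (AlgHom.range_eq_top _).mpr hsurj
  -- coordinates with respect to the basis are given by evaluation
  have hrepr : ∀ (δ : Derivation k B B) (j : Fin m), b.repr δ j = δ (x j) := by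
    intro δ j
    conv_rhs => rw [← b.sum_repr δ]
    rw [der_sum_apply, Finset.sum_eq_single j]
    · rw [Derivation.smul_apply, hb, hD, if_pos rfl, smul_eq_mul, mul_one]
    · intro i _ hne
      rw [Derivation.smul_apply, hb, hD, if_neg hne, smul_zero]
    · intro h
      exact absurd (Finset.mem_univ j) h
  have hscal : ∀ (c : k) (δ : Derivation k B B), c • δ = (algebraMap k B c) • δ := by
    intro c δ
    ext a
    rw [Derivation.smul_apply, Derivation.smul_apply, smul_eq_mul, Algebra.smul_def]
  have hr1 : ∀ i j : Fin m, b.repr (E i - ((-1 : k) ^ (i : ℕ)) • D i) j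
      = E i (x j) - ((-1 : k) ^ (i : ℕ)) • (if i = j then (1 : B) else 0) := by
    intro i j
    rw [map_sub, Finsupp.sub_apply, hrepr (E i) j, hscal, map_smul, Finsupp.smul_apply,
      hrepr (D i) j, hD i j, smul_eq_mul, ← Algebra.smul_def]
  have hEa : ∀ i j : Fin m, E i (x j) = (((Δε : B →ₗ[k] B)) ^ (p ^ (i : ℕ))) (x j) := by
    intro i j
    have := congrArg (fun f : B →ₗ[k] B => f (x j)) (hE i)
    simpa [Derivation.coeFn_coe] using this
  -- Part 1
  have part1 : ∀ i j : Fin m,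
      b.repr (E i - ((-1 : k) ^ (i : ℕ)) • D i) j ∈ Ideal.span (Set.range x) := by
    intro i j
    have hfin : b.repr (E i - ((-1 : k) ^ (i : ℕ)) • D i) j ∈ Jf k x p 1 := by
      rw [hr1 i j, hEa i j]
      exact Epow_mem hPrime hxp hD hodd hadj hΔε i j
    have := Jf_one_le hPrime hfin
    simpa using this
  refine ⟨part1, ?_⟩
  -- Part 2
  set I := Ideal.span (Set.range x) with hI
  set f : Derivation k B B →ₗ[B] Derivation k B B := b.constr ℕ E with hf
  have hfb : ∀ i, f (b i) = E i := fun i => b.constr_basis ℕ E i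
  set A := LinearMap.toMatrix b b f with hA
  have hAentry : ∀ i j, A i j = b.repr (E j) i := by
    intro i j
    rw [hA, LinearMap.toMatrix_apply, hfb]
  have hdiffmem : ∀ i j : Fin m,
      A i j - algebraMap k B ((-1 : k) ^ (j : ℕ)) * (if j = i then 1 else 0) ∈ I := by
    intro i j
    have h1 := part1 j i
    rw [hr1 j i] at h1
    rw [hAentry i j, hrepr (E j) i, ← Algebra.smul_def]
    exact h1
  have hq : A.map ⇑(Ideal.Quotient.mk I) = Matrix.diagonal
      (fun i : Fin m => Ideal.Quotient.mk I (algebraMap k B ((-1 : k) ^ (i : ℕ)))) := by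
    ext i j
    rw [Matrix.map_apply, Matrix.diagonal_apply]
    by_cases hij : i = j
    · subst hij
      rw [if_pos rfl]
      refine (Ideal.Quotient.mk_eq_mk_iff_sub_mem _ _).mpr ?_
      have := hdiffmem i i
      rwa [if_pos rfl, mul_one] at this
    · rw [if_neg hij]
      rw [Ideal.Quotient.eq_zero_iff_mem]
      have := hdiffmem i j
      rwa [if_neg (fun hc => hij hc.symm), mul_zero, sub_zero] at this
  have hdetq : IsUnit (Ideal.Quotient.mk I A.det) := by
    rw [RingHom.map_det, RingHom.mapMatrix_apply, hq, Matrix.det_diagonal]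
    have hcomp : (∏ i : Fin m, Ideal.Quotient.mk I (algebraMap k B ((-1 : k) ^ (i : ℕ))))
        = ((Ideal.Quotient.mk I).comp (algebraMap k B)) (∏ i : Fin m, (-1 : k) ^ (i : ℕ)) := by
      rw [map_prod]
      rfl
    rw [hcomp]
    refine IsUnit.map _ ?_
    rw [Finset.prod_pow_eq_pow_sum]
    exact (isUnit_one.neg).pow _
  have hdet : IsUnit A.det := by
    obtain ⟨u, hu⟩ := hdetq
    obtain ⟨v, hv⟩ := Ideal.Quotient.mk_surjective ((u⁻¹ : (B ⧸ I)ˣ) : B ⧸ I)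
    have h1 : Ideal.Quotient.mk I (A.det * v) = 1 := by
      rw [map_mul, ← hu, hv, u.mul_inv]
    have hsub : A.det * v - 1 ∈ I :=
      (Ideal.Quotient.mk_eq_mk_iff_sub_mem (A.det * v) 1).mp (by rw [h1, map_one])
    have hIle : I ≤ nilradical B := by
      rw [hI, Ideal.span_le]
      rintro y ⟨j, rfl⟩
      exact mem_nilradical.mpr ⟨p, hxp j⟩
    have hnil : IsNilpotent (A.det * v - 1) := mem_nilradical.mp (hIle hsub)
    have hone : IsUnit (A.det * v) := by
      have h2 : A.det * v = 1 + (A.det * v - 1) := by ring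
      rw [h2]
      exact IsNilpotent.isUnit_one_add hnil
    exact isUnit_of_mul_isUnit_left hone
  exact ⟨b.map (LinearEquiv.ofIsUnitDet hdet), fun i => by
    rw [Module.Basis.map_apply, LinearEquiv.ofIsUnitDet_apply, hfb]⟩
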